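/- There exists a metric δ on ℝ³ that is Lipschitz-equivalent to the Euclidean metric (i.e., there are constants 0 < c ≤ C with c·|p − q| ≤ δ(p, q) ≤ C·|p − q| for all p, q ∈ ℝ³) such that every map w_n^{rs}, for r, s ∈ {1,2} and 1 ≤ n ≤ K^{rs}, is a contraction with respect to δ. -/

import Mathlib

open Set

noncomputable def eDist (p q : ℝ × ℝ × ℝ) : ℝ :=
  Real.sqrt ((p.1 - q.1) ^ 2 + (p.2.1 - q.2.1) ^ 2 + (p.2.2 - q.2.2) ^ 2)

/-- Strict monotonicity from consecutive increases. -/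
lemma mono_aux (x : ℕ → ℝ) (N : ℕ) (h : ∀ i, i < N → x i < x (i + 1)) :
    ∀ i j, i < j → j ≤ N → x i < x j := by
  intro i j hij hjN
  induction j with
  | zero => omega
  | succ j ih =>
    rcases Nat.lt_or_ge i j with h' | h'
    · exact lt_trans (ih h' (by omega)) (h j (by omega))
    · have : i = j := by omega
      subst this
      exact h i (by omega)

/-- Gap strictly smaller than total span. -/
lemma gap_lt (x : ℕ → ℝ) (Nn : ℕ) (hN : 2 ≤ Nn)
    (hmono : ∀ i j, i < j → j ≤ Nn → x i < x j)
    (m : ℕ) (hm1 : 1 ≤ m) (hm2 : m ≤ Nn) :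
    x m - x (m - 1) < x Nn - x 0 := by
  rcases eq_or_lt_of_le hm2 with h | h
  · subst h
    have h1 : x 0 < x (m - 1) := hmono 0 (m - 1) (by omega) (by omega)
    linarith
  · have h1 : x m < x Nn := hmono m Nn h le_rfl
    have h2 : x 0 ≤ x (m - 1) := by
      rcases Nat.lt_or_ge 0 (m - 1) with h' | h'
      · exact le_of_lt (hmono 0 (m - 1) h' (by omega))
      · have : m - 1 = 0 := by omega
        rw [this]
    linarith

/-- Slope bound. -/
lemma slope_abs_lt_one {A B u u' v v' : ℝ} (h1 : A * u + B = v) (h2 : A * u' + B = v')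
    (hu : u < u') (hv : v ≤ v') (hlt : v' - v < u' - u) : |A| < 1 := by
  have hA : A * (u' - u) = v' - v := by linear_combination h2 - h1
  have hApos : 0 ≤ A := by nlinarith
  rw [abs_of_nonneg hApos]
  nlinarith

/-- Sup over the finitely many maps. -/
noncomputable def supK (N M : ℕ) (K : Fin 2 → Fin 2 → ℕ) (v : Fin 2 → Fin 2 → ℕ → ℝ) : ℝ :=
  (Finset.Icc 1 (max N M + 1)).sup' ⟨1, by simp⟩ fun n =>
    max (max (if n ≤ K 0 0 then v 0 0 n else 0) (if n ≤ K 0 1 then v 0 1 n else 0))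
        (max (if n ≤ K 1 0 then v 1 0 n else 0) (if n ≤ K 1 1 then v 1 1 n else 0))

lemma le_supK (N M : ℕ) (K : Fin 2 → Fin 2 → ℕ) (v : Fin 2 → Fin 2 → ℕ → ℝ)
    (r s : Fin 2) (n : ℕ) (hn1 : 1 ≤ n) (hn2 : n ≤ K r s) (hK : K r s ≤ max N M) :
    v r s n ≤ supK N M K v := by
  have hmem : n ∈ Finset.Icc 1 (max N M + 1) := by
    simp only [Finset.mem_Icc]; omega
  refine le_trans ?_ (Finset.le_sup' _ hmem)
  fin_cases r <;> fin_cases s <;>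
    simp only [Fin.zero_eta, Fin.mk_one, Fin.isValue] at hn2 ⊢ <;>
  · rw [if_pos hn2]
    first
      | exact le_max_of_le_left (le_max_left _ _)
      | exact le_max_of_le_left (le_max_right _ _)
      | exact le_max_of_le_right (le_max_left _ _)
      | exact le_max_of_le_right (le_max_right _ _)

lemma supK_lt_one (N M : ℕ) (K : Fin 2 → Fin 2 → ℕ) (v : Fin 2 → Fin 2 → ℕ → ℝ)
    (hv : ∀ r s n, 1 ≤ n → n ≤ K r s → v r s n < 1) : supK N M K v < 1 := by
  rw [supK]
  apply (Finset.sup'_lt_iff (H := _)).2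
  intro n hn
  simp only [Finset.mem_Icc] at hn
  have : ∀ r s : Fin 2, (if n ≤ K r s then v r s n else 0) < 1 := by
    intro r s
    split
    · exact hv r s n hn.1 ‹_›
    · exact one_pos
  exact max_lt (max_lt (this 0 0) (this 0 1)) (max_lt (this 1 0) (this 1 1))

lemma supK_nonneg (N M : ℕ) (K : Fin 2 → Fin 2 → ℕ) (v : Fin 2 → Fin 2 → ℕ → ℝ)
    (hv : ∀ r s n, 0 ≤ v r s n) : 0 ≤ supK N M K v := by
  have hmem : 1 ∈ Finset.Icc 1 (max N M + 1) := by simp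
  refine le_trans ?_ (Finset.le_sup' _ hmem)
  refine le_max_of_le_left (le_max_of_le_left ?_)
  split
  · exact hv 0 0 1
  · exact le_rfl

lemma sqrt_le_abs_sum (u v w : ℝ) : Real.sqrt (u ^ 2 + v ^ 2 + w ^ 2) ≤ |u| + |v| + |w| := by
  rw [show |u| + |v| + |w| = Real.sqrt ((|u| + |v| + |w|) ^ 2) from
    (Real.sqrt_sq (by positivity)).symm]
  apply Real.sqrt_le_sqrt
  nlinarith [sq_abs u, sq_abs v, sq_abs w, mul_nonneg (abs_nonneg u) (abs_nonneg v),
    mul_nonneg (abs_nonneg u) (abs_nonneg w), mul_nonneg (abs_nonneg v) (abs_nonneg w)]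

lemma abs_le_sqrt3 (u v w : ℝ) :
    |u| ≤ Real.sqrt (u ^ 2 + v ^ 2 + w ^ 2) ∧ |v| ≤ Real.sqrt (u ^ 2 + v ^ 2 + w ^ 2) ∧
    |w| ≤ Real.sqrt (u ^ 2 + v ^ 2 + w ^ 2) := by
  refine ⟨?_, ?_, ?_⟩ <;>
  · rw [← Real.sqrt_sq_eq_abs]
    apply Real.sqrt_le_sqrt
    nlinarith [sq_nonneg u, sq_nonneg v, sq_nonneg w]


theorem stmt_3
    (N M : ℕ) (hN : 2 ≤ N) (hM : 2 ≤ M)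
    (x1 y1 z1 x2 y2 z2 : ℕ → ℝ)
    (hx1 : ∀ i, i < N → x1 i < x1 (i + 1))
    (hx2 : ∀ j, j < M → x2 j < x2 (j + 1))
    (hstar1 : ∀ i, 1 ≤ i → i ≤ N → x1 i - x1 (i - 1) < x2 M - x2 0)
    (hstar2 : ∀ j, 1 ≤ j → j ≤ M → x2 j - x2 (j - 1) < x1 N - x1 0)
    (K : Fin 2 → Fin 2 → ℕ)
    (hK1 : K 0 0 + K 0 1 = N) (hK2 : K 1 0 + K 1 1 = M)
    (a b c d e f α β γ : Fin 2 → Fin 2 → ℕ → ℝ)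
    (hα : ∀ r s n, 1 ≤ n → n ≤ K r s → |α r s n| < 1)
    (hγ : ∀ r s n, 1 ≤ n → n ≤ K r s → |γ r s n| < 1)
    (hβγ : ∀ r s n, 1 ≤ n → n ≤ K r s → |β r s n| + |γ r s n| < 1)
    (w : Fin 2 → Fin 2 → ℕ → ℝ × ℝ × ℝ → ℝ × ℝ × ℝ)
    (hw : ∀ r s n p, w r s n p =
      (a r s n * p.1 + b r s n,
       c r s n * p.1 + α r s n * p.2.1 + β r s n * p.2.2 + d r s n,
       e r s n * p.1 + γ r s n * p.2.2 + f r s n))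
    (hj11 : ∀ n, 1 ≤ n → n ≤ K 0 0 →
      w 0 0 n (x1 0, y1 0, z1 0) = (x1 (n - 1), y1 (n - 1), z1 (n - 1)) ∧
      w 0 0 n (x1 N, y1 N, z1 N) = (x1 n, y1 n, z1 n))
    (hj12 : ∀ n, 1 ≤ n → n ≤ K 0 1 →
      w 0 1 n (x2 0, y2 0, z2 0) =
        (x1 (K 0 0 + n - 1), y1 (K 0 0 + n - 1), z1 (K 0 0 + n - 1)) ∧
      w 0 1 n (x2 M, y2 M, z2 M) = (x1 (K 0 0 + n), y1 (K 0 0 + n), z1 (K 0 0 + n)))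
    (hj21 : ∀ n, 1 ≤ n → n ≤ K 1 0 →
      w 1 0 n (x1 0, y1 0, z1 0) = (x2 (n - 1), y2 (n - 1), z2 (n - 1)) ∧
      w 1 0 n (x1 N, y1 N, z1 N) = (x2 n, y2 n, z2 n))
    (hj22 : ∀ n, 1 ≤ n → n ≤ K 1 1 →
      w 1 1 n (x2 0, y2 0, z2 0) =
        (x2 (K 1 0 + n - 1), y2 (K 1 0 + n - 1), z2 (K 1 0 + n - 1)) ∧
      w 1 1 n (x2 M, y2 M, z2 M) = (x2 (K 1 0 + n), y2 (K 1 0 + n), z2 (K 1 0 + n))) :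
    ∃ δ : (ℝ × ℝ × ℝ) → (ℝ × ℝ × ℝ) → ℝ,
      (∀ p q, 0 ≤ δ p q) ∧
      (∀ p q, δ p q = δ q p) ∧
      (∀ p q, δ p q = 0 ↔ p = q) ∧
      (∀ p q r', δ p r' ≤ δ p q + δ q r') ∧
      (∃ cl cu : ℝ, 0 < cl ∧ cl ≤ cu ∧
        ∀ p q, cl * eDist p q ≤ δ p q ∧ δ p q ≤ cu * eDist p q) ∧
      (∀ (r s : Fin 2) (n : ℕ), 1 ≤ n → n ≤ K r s →
        ∃ k : ℝ, 0 ≤ k ∧ k < 1 ∧ ∀ p q, δ (w r s n p) (w r s n q) ≤ k * δ p q) := by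
  have hmono1 := mono_aux x1 N hx1
  have hmono2 := mono_aux x2 M hx2
  have hKle : ∀ r s : Fin 2, K r s ≤ max N M := by
    intro r s
    fin_cases r <;> fin_cases s <;>
      simp only [Fin.zero_eta, Fin.mk_one, Fin.isValue]
    · exact le_trans (by omega) (le_max_left N M)
    · exact le_trans (by omega) (le_max_left N M)
    · exact le_trans (by omega) (le_max_right N M)
    · exact le_trans (by omega) (le_max_right N M)
  -- |a r s n| < 1 for all relevant maps
  have ha : ∀ (r s : Fin 2) (n : ℕ), 1 ≤ n → n ≤ K r s → |a r s n| < 1 := by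
    intro r s n hn1 hn2
    fin_cases r <;> fin_cases s <;>
      simp only [Fin.zero_eta, Fin.mk_one, Fin.isValue] at hn2 ⊢
    · obtain ⟨h1, h2⟩ := hj11 n hn1 hn2
      simp only [hw, Prod.mk.injEq] at h1 h2
      exact slope_abs_lt_one h1.1 h2.1 (hmono1 0 N (by omega) le_rfl)
        (le_of_lt (hmono1 (n - 1) n (by omega) (by omega)))
        (gap_lt x1 N hN hmono1 n hn1 (by omega))
    · obtain ⟨h1, h2⟩ := hj12 n hn1 hn2
      simp only [hw, Prod.mk.injEq] at h1 h2
      exact slope_abs_lt_one h1.1 h2.1 (hmono2 0 M (by omega) le_rfl)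
        (le_of_lt (hmono1 (K 0 0 + n - 1) (K 0 0 + n) (by omega) (by omega)))
        (hstar1 (K 0 0 + n) (by omega) (by omega))
    · obtain ⟨h1, h2⟩ := hj21 n hn1 hn2
      simp only [hw, Prod.mk.injEq] at h1 h2
      exact slope_abs_lt_one h1.1 h2.1 (hmono1 0 N (by omega) le_rfl)
        (le_of_lt (hmono2 (n - 1) n (by omega) (by omega)))
        (hstar2 n hn1 (by omega))
    · obtain ⟨h1, h2⟩ := hj22 n hn1 hn2
      simp only [hw, Prod.mk.injEq] at h1 h2
      exact slope_abs_lt_one h1.1 h2.1 (hmono2 0 M (by omega) le_rfl)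
        (le_of_lt (hmono2 (K 1 0 + n - 1) (K 1 0 + n) (by omega) (by omega)))
        (gap_lt x2 M hM hmono2 (K 1 0 + n) (by omega) (by omega))
  -- the contraction constant
  obtain ⟨k, hk0, hk1, hkb⟩ : ∃ k : ℝ, 0 ≤ k ∧ k < 1 ∧
      ∀ (r s : Fin 2) (n : ℕ), 1 ≤ n → n ≤ K r s →
        |a r s n| ≤ k ∧ |α r s n| ≤ k ∧ |β r s n| + |γ r s n| ≤ k := by
    refine ⟨supK N M K
      (fun r s n => max |a r s n| (max |α r s n| (|β r s n| + |γ r s n|))), ?_, ?_, ?_⟩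
    · exact supK_nonneg N M K _ fun r s n => le_max_of_le_left (abs_nonneg _)
    · exact supK_lt_one N M K _ fun r s n hn1 hn2 =>
        max_lt (ha r s n hn1 hn2) (max_lt (hα r s n hn1 hn2) (hβγ r s n hn1 hn2))
    · intro r s n hn1 hn2
      have h := le_supK N M K
        (fun r s n => max |a r s n| (max |α r s n| (|β r s n| + |γ r s n|)))
        r s n hn1 hn2 (hKle r s)
      exact ⟨le_trans (le_max_left _ _) h,
        le_trans (le_trans (le_max_left _ _) (le_max_right _ _)) h,
        le_trans (le_trans (le_max_right _ _) (le_max_right _ _)) h⟩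
  obtain ⟨Cm, hCm0, hCle⟩ : ∃ Cm : ℝ, 0 ≤ Cm ∧
      ∀ (r s : Fin 2) (n : ℕ), 1 ≤ n → n ≤ K r s → |c r s n| + |e r s n| ≤ Cm := by
    refine ⟨supK N M K (fun r s n => |c r s n| + |e r s n|), ?_, ?_⟩
    · exact supK_nonneg N M K _ fun r s n => by positivity
    · intro r s n hn1 hn2
      exact le_supK N M K (fun r s n => |c r s n| + |e r s n|) r s n hn1 hn2 (hKle r s)
  have h1k : (0:ℝ) < 1 - k := by linarith
  obtain ⟨θ, hθ1, hθCm⟩ : ∃ θ : ℝ, 1 ≤ θ ∧ Cm ≤ θ * ((1 - k) / 2) := by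
    refine ⟨1 + 2 * Cm / (1 - k), ?_, ?_⟩
    · have h : 0 ≤ 2 * Cm / (1 - k) := div_nonneg (by linarith) (by linarith)
      linarith
    · have h : (1 + 2 * Cm / (1 - k)) * ((1 - k) / 2) = (1 - k) / 2 + Cm := by
        field_simp
      linarith
  have hθ0 : (0:ℝ) < θ := by linarith
  refine ⟨fun p q => θ * |p.1 - q.1| + |p.2.1 - q.2.1| + |p.2.2 - q.2.2|,
    ?_, ?_, ?_, ?_, ?_, ?_⟩
  · intro p q
    exact add_nonneg (add_nonneg (mul_nonneg hθ0.le (abs_nonneg _)) (abs_nonneg _))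
      (abs_nonneg _)
  · intro p q
    dsimp only
    rw [abs_sub_comm p.1, abs_sub_comm p.2.1, abs_sub_comm p.2.2]
  · intro p q
    dsimp only
    constructor
    · intro h
      have hA := abs_nonneg (p.1 - q.1)
      have hB := abs_nonneg (p.2.1 - q.2.1)
      have hC := abs_nonneg (p.2.2 - q.2.2)
      have hθA : |p.1 - q.1| ≤ θ * |p.1 - q.1| := le_mul_of_one_le_left hA hθ1
      have e1 : p.1 = q.1 := by
        have : |p.1 - q.1| = 0 := by linarith
        have := abs_eq_zero.mp this
        linarith
      have e2 : p.2.1 = q.2.1 := by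
        have : |p.2.1 - q.2.1| = 0 := by linarith
        have := abs_eq_zero.mp this
        linarith
      have e3 : p.2.2 = q.2.2 := by
        have : |p.2.2 - q.2.2| = 0 := by linarith
        have := abs_eq_zero.mp this
        linarith
      exact Prod.ext_iff.mpr ⟨e1, Prod.ext_iff.mpr ⟨e2, e3⟩⟩
    · rintro rfl
      simp
  · intro p q r'
    dsimp only
    have t1 := abs_sub_le p.1 q.1 r'.1
    have t2 := abs_sub_le p.2.1 q.2.1 r'.2.1
    have t3 := abs_sub_le p.2.2 q.2.2 r'.2.2
    have t1' := mul_le_mul_of_nonneg_left t1 hθ0.le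
    linarith
  · refine ⟨1, 3 * θ, one_pos, by linarith, ?_⟩
    intro p q
    dsimp only
    have hsq := sqrt_le_abs_sum (p.1 - q.1) (p.2.1 - q.2.1) (p.2.2 - q.2.2)
    obtain ⟨u1, u2, u3⟩ := abs_le_sqrt3 (p.1 - q.1) (p.2.1 - q.2.1) (p.2.2 - q.2.2)
    have hE0 : 0 ≤ eDist p q := Real.sqrt_nonneg _
    have hle : |p.1 - q.1| ≤ θ * |p.1 - q.1| :=
      le_mul_of_one_le_left (abs_nonneg _) hθ1
    constructor
    · rw [one_mul]
      unfold eDist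
      linarith
    · have hu1 : θ * |p.1 - q.1| ≤ θ * eDist p q := by
        unfold eDist
        exact mul_le_mul_of_nonneg_left u1 hθ0.le
      have hu2 : |p.2.1 - q.2.1| ≤ eDist p q := by unfold eDist; exact u2
      have hu3 : |p.2.2 - q.2.2| ≤ eDist p q := by unfold eDist; exact u3
      have hE : eDist p q ≤ θ * eDist p q := le_mul_of_one_le_left hE0 hθ1
      nlinarith
  · intro r s n hn1 hn2
    refine ⟨(1 + k) / 2, by linarith, by linarith, ?_⟩
    intro p q
    simp only [hw]
    have r1 : (a r s n * p.1 + b r s n) - (a r s n * q.1 + b r s n)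
        = a r s n * (p.1 - q.1) := by ring
    have r2 : (c r s n * p.1 + α r s n * p.2.1 + β r s n * p.2.2 + d r s n)
        - (c r s n * q.1 + α r s n * q.2.1 + β r s n * q.2.2 + d r s n)
        = c r s n * (p.1 - q.1) + α r s n * (p.2.1 - q.2.1)
          + β r s n * (p.2.2 - q.2.2) := by ring
    have r3 : (e r s n * p.1 + γ r s n * p.2.2 + f r s n)
        - (e r s n * q.1 + γ r s n * q.2.2 + f r s n)
        = e r s n * (p.1 - q.1) + γ r s n * (p.2.2 - q.2.2) := by ring
    rw [r1, r2, r3, abs_mul]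
    obtain ⟨hA, hAl, hBG⟩ := hkb r s n hn1 hn2
    have hCE := hCle r s n hn1 hn2
    have h2 : |c r s n * (p.1 - q.1) + α r s n * (p.2.1 - q.2.1)
        + β r s n * (p.2.2 - q.2.2)|
        ≤ |c r s n| * |p.1 - q.1| + |α r s n| * |p.2.1 - q.2.1|
          + |β r s n| * |p.2.2 - q.2.2| := by
      calc _ ≤ |c r s n * (p.1 - q.1)| + |α r s n * (p.2.1 - q.2.1)|
            + |β r s n * (p.2.2 - q.2.2)| := abs_add_three _ _ _
        _ = _ := by rw [abs_mul, abs_mul, abs_mul]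
    have h3 : |e r s n * (p.1 - q.1) + γ r s n * (p.2.2 - q.2.2)|
        ≤ |e r s n| * |p.1 - q.1| + |γ r s n| * |p.2.2 - q.2.2| := by
      calc _ ≤ |e r s n * (p.1 - q.1)| + |γ r s n * (p.2.2 - q.2.2)| := abs_add_le _ _
        _ = _ := by rw [abs_mul, abs_mul]
    have key : θ * |a r s n| + (|c r s n| + |e r s n|) ≤ θ * ((1 + k) / 2) := by
      have e1 : θ * k + θ * ((1 - k) / 2) = θ * ((1 + k) / 2) := by ring
      have e2 : θ * |a r s n| ≤ θ * k := mul_le_mul_of_nonneg_left hA hθ0.le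
      linarith
    have m1 : (θ * |a r s n| + |c r s n| + |e r s n|) * |p.1 - q.1|
        ≤ (θ * ((1 + k) / 2)) * |p.1 - q.1| :=
      mul_le_mul_of_nonneg_right (by linarith) (abs_nonneg _)
    have m2 : |α r s n| * |p.2.1 - q.2.1| ≤ ((1 + k) / 2) * |p.2.1 - q.2.1| :=
      mul_le_mul_of_nonneg_right (by linarith) (abs_nonneg _)
    have m3 : (|β r s n| + |γ r s n|) * |p.2.2 - q.2.2|
        ≤ ((1 + k) / 2) * |p.2.2 - q.2.2| :=
      mul_le_mul_of_nonneg_right (by linarith) (abs_nonneg _)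
    have hfin : (1 + k) / 2 * (θ * |p.1 - q.1| + |p.2.1 - q.2.1| + |p.2.2 - q.2.2|)
        = (θ * ((1 + k) / 2)) * |p.1 - q.1| + ((1 + k) / 2) * |p.2.1 - q.2.1|
          + ((1 + k) / 2) * |p.2.2 - q.2.2| := by ring
    linarith [m1, m2, m3, h2, h3, hfin]
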